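/- Let (a,b,c) be a Markoff triple of reals and T a trace function for (a,b,c). Then for every pair of primitive vectors v, w of ℤ² with det(v,w) = ±1, the triple (T(v), T(w), T(v+w)) satisfies the Markoff equation: T(v)² + T(w)² + T(v+w)² = T(v)·T(w)·T(v+w). -/

import Mathlib

/-- A vector of `ℤ²` is primitive if its coordinates are coprime. -/
def Primitive (v : ℤ × ℤ) : Prop := IsCoprime v.1 v.2

/-- A trace function for a triple `(a,b,c)` of reals: a function on `ℤ²` satisfying
`T(−v) = T(v)` for primitive `v`, with `T(0,1) = a`, `T(1,1) = b`, `T(1,0) = c`, and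
`T(v+w) = T(v)·T(w) − T(v−w)` whenever `v, w` are primitive with `det(v,w) = ±1`. -/
structure IsTraceFunction (a b c : ℝ) (T : ℤ × ℤ → ℝ) : Prop where
  neg_eq : ∀ v : ℤ × ℤ, Primitive v → T (-v) = T v
  map_01 : T (0, 1) = a
  map_11 : T (1, 1) = b
  map_10 : T (1, 0) = c
  add_rule : ∀ v w : ℤ × ℤ, Primitive v → Primitive w →
    (v.1 * w.2 - v.2 * w.1 = 1 ∨ v.1 * w.2 - v.2 * w.1 = -1) →
    T (v + w) = T v * T w - T (v - w)

namespace TraceAux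

/-- determinant condition -/
def Det (v w : ℤ × ℤ) : Prop :=
  v.1 * w.2 - v.2 * w.1 = 1 ∨ v.1 * w.2 - v.2 * w.1 = -1

/-- Markoff equation for an edge -/
def MEq (T : ℤ × ℤ → ℝ) (v w : ℤ × ℤ) : Prop :=
  T v ^ 2 + T w ^ 2 + T (v + w) ^ 2 = T v * T w * T (v + w)

lemma detPrimLeft {v w : ℤ × ℤ} (h : Det v w) : Primitive v := by
  rcases h with h | h
  · exact ⟨w.2, -w.1, by linear_combination h⟩
  · exact ⟨-w.2, w.1, by linear_combination -h⟩

lemma detPrimRight {v w : ℤ × ℤ} (h : Det v w) : Primitive w := by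
  rcases h with h | h
  · exact ⟨-v.2, v.1, by linear_combination h⟩
  · exact ⟨v.2, -v.1, by linear_combination -h⟩

lemma detSub {v w : ℤ × ℤ} (h : Det v w) : Det (v - w) w := by
  rcases h with h | h
  · left
    simp only [Prod.fst_sub, Prod.snd_sub]
    linear_combination h
  · right
    simp only [Prod.fst_sub, Prod.snd_sub]
    linear_combination h

lemma detOpp {v w : ℤ × ℤ} (h : Det v w) : Det (v + w) (-w) := by
  rcases h with h | h
  · right
    simp only [Prod.fst_add, Prod.snd_add, Prod.fst_neg, Prod.snd_neg]
    linear_combination -h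
  · left
    simp only [Prod.fst_add, Prod.snd_add, Prod.fst_neg, Prod.snd_neg]
    linear_combination -h

lemma detRightSub {v w : ℤ × ℤ} (h : Det v w) : Det v (w - v) := by
  rcases h with h | h
  · left
    simp only [Prod.fst_sub, Prod.snd_sub]
    linear_combination h
  · right
    simp only [Prod.fst_sub, Prod.snd_sub]
    linear_combination h

lemma detNegAdd {v w : ℤ × ℤ} (h : Det v w) : Det (-v) (v + w) := by
  rcases h with h | h
  · right
    simp only [Prod.fst_add, Prod.snd_add, Prod.fst_neg, Prod.snd_neg]
    linear_combination -h
  · left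
    simp only [Prod.fst_add, Prod.snd_add, Prod.fst_neg, Prod.snd_neg]
    linear_combination -h

lemma detSwap {v w : ℤ × ℤ} (h : Det v w) : Det w v := by
  rcases h with h | h
  · right; linear_combination -h
  · left; linear_combination -h

section

variable {a b c : ℝ} {T : ℤ × ℤ → ℝ} (hT : IsTraceFunction a b c T)
include hT

lemma addrule' {v w : ℤ × ℤ} (h : Det v w) : T (v + w) = T v * T w - T (v - w) :=
  hT.add_rule v w (detPrimLeft h) (detPrimRight h) h

/-- pass from the `v - w` version of the equation to the `v + w` version -/
lemma step {v w : ℤ × ℤ} (h : Det v w)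
    (h2 : T (v - w) ^ 2 + T w ^ 2 + T v ^ 2 = T (v - w) * T w * T v) :
    MEq T v w := by
  have h1 := addrule' hT h
  unfold MEq
  linear_combination h2 + (T (v + w) - T (v - w)) * h1

lemma negright' {v w : ℤ × ℤ} (h : Det v w) (he : MEq T v w) : MEq T v (-w) := by
  unfold MEq at he ⊢
  rw [hT.neg_eq w (detPrimRight h), ← sub_eq_add_neg]
  have h1 := addrule' hT h
  linear_combination he - (T (v + w) - T (v - w)) * h1

lemma negleft' {v w : ℤ × ℤ} (h : Det v w) (he : MEq T v w) : MEq T (-v) w := by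
  unfold MEq at he ⊢
  have e : -v + w = -(v - w) := by abel
  rw [hT.neg_eq v (detPrimLeft h), e, hT.neg_eq _ (detPrimLeft (detSub h))]
  have h1 := addrule' hT h
  linear_combination he - (T (v + w) - T (v - w)) * h1

variable (habc : a ^ 2 + b ^ 2 + c ^ 2 = a * b * c)
include habc

lemma baseA : ∀ t : ℤ,
    T (1, t) ^ 2 + a ^ 2 + T (1, t + 1) ^ 2 = T (1, t) * a * T (1, t + 1) := by
  have hrule : ∀ s : ℤ, T (1, s + 1) = T (1, s) * a - T (1, s - 1) := by
    intro s
    have h : Det ((1, s) : ℤ × ℤ) (0, 1) := Or.inl (by simp)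
    have h' := addrule' hT h
    have e1 : ((1, s) : ℤ × ℤ) + (0, 1) = (1, s + 1) := by simp [Prod.ext_iff]
    have e2 : ((1, s) : ℤ × ℤ) - (0, 1) = (1, s - 1) := by simp [Prod.ext_iff]
    rw [e1, e2, hT.map_01] at h'
    exact h'
  intro t
  induction t using Int.induction_on with
  | zero =>
    have e : (0 : ℤ) + 1 = 1 := by norm_num
    rw [e, hT.map_10, hT.map_11]
    linear_combination habc
  | succ i ih =>
    have h1 := hrule ((i : ℤ) + 1)
    rw [add_sub_cancel_right] at h1
    linear_combination ih + (T (1, (i : ℤ) + 1 + 1) - T (1, (i : ℤ))) * h1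
  | pred i ih =>
    have h1 := hrule (-(i : ℤ))
    have e : -(i : ℤ) - 1 + 1 = -(i : ℤ) := by ring
    rw [e]
    linear_combination ih - (T (1, -(i : ℤ) + 1) - T (1, -(i : ℤ) - 1)) * h1

lemma E11 (t : ℤ) : MEq T (1, t) (0, 1) := by
  unfold MEq
  have e1 : ((1, t) : ℤ × ℤ) + (0, 1) = (1, t + 1) := by simp [Prod.ext_iff]
  rw [e1, hT.map_01]
  exact baseA hT habc t

lemma case0 {v w : ℤ × ℤ} (hdet : Det v w) (hw1 : w.1 = 0) : MEq T v w := by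
  obtain ⟨v1, v2⟩ := v
  obtain ⟨w1, w2⟩ := w
  simp only at hw1
  subst hw1
  have hw2 : w2 = 1 ∨ w2 = -1 := by
    have hp := detPrimRight hdet
    have : IsCoprime (0 : ℤ) w2 := hp
    exact Int.isUnit_iff.mp (isCoprime_zero_left.mp this)
  have hd : v1 * w2 = 1 ∨ v1 * w2 = -1 := by
    rcases hdet with h | h
    · left; linear_combination h
    · right; linear_combination h
  have hv1 : v1 = 1 ∨ v1 = -1 := by
    rcases hw2 with h2 | h2 <;> subst h2 <;> omega
  rcases hv1 with h1 | h1 <;> subst h1 <;> rcases hw2 with h2 | h2 <;> subst h2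
  · exact E11 hT habc v2
  · rw [show ((0 : ℤ), (-1 : ℤ)) = -((0 : ℤ), (1 : ℤ)) from by simp]
    exact negright' hT (Or.inl (by simp)) (E11 hT habc v2)
  · rw [show (((-1 : ℤ), v2) : ℤ × ℤ) = -((1 : ℤ), -v2) from by simp]
    exact negleft' hT (Or.inl (by simp)) (E11 hT habc (-v2))
  · rw [show (((-1 : ℤ), v2) : ℤ × ℤ) = -((1 : ℤ), -v2) from by simp,
      show ((0 : ℤ), (-1 : ℤ)) = -((0 : ℤ), (1 : ℤ)) from by simp]
    exact negright' hT (Or.inr (by simp)) (negleft' hT (Or.inl (by simp)) (E11 hT habc (-v2)))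

lemma main : ∀ n : ℕ, ∀ v w : ℤ × ℤ, v.1.natAbs + w.1.natAbs = n → Det v w → MEq T v w := by
  intro n
  induction n using Nat.strong_induction_on with
  | _ n IH =>
    intro v w hn hdet
    by_cases hw1 : w.1 = 0
    · exact case0 hT habc hdet hw1
    by_cases hv1 : v.1 = 0
    · have h := case0 hT habc (detSwap hdet) hv1
      unfold MEq at h ⊢
      rw [add_comm w v] at h
      linear_combination h
    -- both first coordinates nonzero
    rcases le_or_gt w.1.natAbs v.1.natAbs with hle | hlt
    · by_cases hsign : 0 < v.1 * w.1
      · -- same sign: reduce v to v - w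
        have hsgn := mul_pos_iff.mp hsign
        have hm : (v - w).1.natAbs + w.1.natAbs < n := by
          rw [Prod.fst_sub]; omega
        have h2 := IH _ hm (v - w) w rfl (detSub hdet)
        unfold MEq at h2
        rw [sub_add_cancel] at h2
        exact step hT hdet (by linear_combination h2)
      · -- opposite sign: pass to (v + w, -w)
        have hsign' : v.1 * w.1 < 0 := by
          rcases (mul_ne_zero hv1 hw1).lt_or_gt with h | h
          · exact h
          · exact absurd h hsign
        have hsgn := mul_neg_iff.mp hsign'
        have hm : (v + w).1.natAbs + (-w).1.natAbs < n := by
          rw [Prod.fst_add, Prod.fst_neg, Int.natAbs_neg]; omega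
        have h2 := IH _ hm (v + w) (-w) rfl (detOpp hdet)
        unfold MEq at h2 ⊢
        rw [add_neg_cancel_right, hT.neg_eq w (detPrimRight hdet)] at h2
        linear_combination h2
    · by_cases hsign : 0 < v.1 * w.1
      · -- same sign: reduce w to w - v
        have hsgn := mul_pos_iff.mp hsign
        have hm : v.1.natAbs + (w - v).1.natAbs < n := by
          rw [Prod.fst_sub]; omega
        have h2 := IH _ hm v (w - v) rfl (detRightSub hdet)
        unfold MEq at h2
        rw [add_sub_cancel] at h2
        have e : w - v = -(v - w) := by abel
        rw [e, hT.neg_eq _ (detPrimLeft (detSub hdet))] at h2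
        exact step hT hdet (by linear_combination h2)
      · -- opposite sign: pass to (-v, v + w)
        have hsign' : v.1 * w.1 < 0 := by
          rcases (mul_ne_zero hv1 hw1).lt_or_gt with h | h
          · exact h
          · exact absurd h hsign
        have hsgn := mul_neg_iff.mp hsign'
        have hm : (-v).1.natAbs + (v + w).1.natAbs < n := by
          rw [Prod.fst_add, Prod.fst_neg, Int.natAbs_neg]; omega
        have h2 := IH _ hm (-v) (v + w) rfl (detNegAdd hdet)
        unfold MEq at h2 ⊢
        rw [neg_add_cancel_left, hT.neg_eq v (detPrimLeft hdet)] at h2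
        linear_combination h2

end

end TraceAux

/-- If `(a,b,c)` is a Markoff triple of reals and `T` is a trace function for `(a,b,c)`,
then for primitive `v, w` with `det(v,w) = ±1`, the triple `(T v, T w, T (v+w))`
satisfies the Markoff equation. -/
theorem trace_function_markoff_equation (a b c : ℝ) (ha : 2 < a) (hb : 2 < b) (hc : 2 < c)
    (habc : a ^ 2 + b ^ 2 + c ^ 2 = a * b * c)
    (T : ℤ × ℤ → ℝ) (hT : IsTraceFunction a b c T) :
    ∀ v w : ℤ × ℤ, Primitive v → Primitive w →
      (v.1 * w.2 - v.2 * w.1 = 1 ∨ v.1 * w.2 - v.2 * w.1 = -1) →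
      T v ^ 2 + T w ^ 2 + T (v + w) ^ 2 = T v * T w * T (v + w) := by
  intro v w _ _ hdet
  exact TraceAux.main hT habc _ v w rfl hdet
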